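/- Let X be a completely regular Hausdorff (T3.5) space. If player II has a winning strategy in the ω-Rothberger game G1(Ω_X,Ω_X), then player I has a winning strategy in the game ΩFO(X). -/

import Mathlib

open Set Filter Topology

/-- The list `[a 0, …, a (n-1)]` of the first `n` moves of a play `a`. -/
def hist {α : Type*} (a : ℕ → α) (n : ℕ) : List α :=
  List.ofFn fun i : Fin n => a i

section SelectionGames

variable {M : Type*}

/-- The selection principle `S1(A,B)`. -/
def S1 (A B : Set (Set M)) : Prop :=
  ∀ a : ℕ → Set M, (∀ n, a n ∈ A) →
    ∃ b : ℕ → M, (∀ n, b n ∈ a n) ∧ Set.range b ∈ B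

/-- The selection principle `Sfin(A,B)`. -/
def Sfin (A B : Set (Set M)) : Prop :=
  ∀ a : ℕ → Set M, (∀ n, a n ∈ A) →
    ∃ b : ℕ → Set M, (∀ n, b n ⊆ a n ∧ (b n).Finite) ∧ (⋃ n, b n) ∈ B

/-- Player I has a winning predetermined strategy in the selection game `G1(A,B)`:
a sequence of moves `σ n ∈ A`, depending only on the round number, such that
no legal sequence of responses by II produces a member of `B`. -/
def IPredetWinsG1 (A B : Set (Set M)) : Prop :=
  ∃ σ : ℕ → Set M, (∀ n, σ n ∈ A) ∧
    ∀ b : ℕ → M, (∀ n, b n ∈ σ n) → Set.range b ∉ B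

/-- Player I has a winning predetermined strategy in the selection game `Gfin(A,B)`. -/
def IPredetWinsGfin (A B : Set (Set M)) : Prop :=
  ∃ σ : ℕ → Set M, (∀ n, σ n ∈ A) ∧
    ∀ b : ℕ → Set M, (∀ n, b n ⊆ σ n ∧ (b n).Finite) → (⋃ n, b n) ∉ B

/-- Player I has a winning (perfect-information) strategy in `G1(A,B)`:
I's move in round `n` depends on II's previous moves `b 0, …, b (n-1)`. -/
def IWinsG1 (A B : Set (Set M)) : Prop :=
  ∃ σ : List M → Set M, (∀ h, σ h ∈ A) ∧
    ∀ b : ℕ → M, (∀ n, b n ∈ σ (hist b n)) → Set.range b ∉ B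

/-- Player II has a winning (perfect-information) strategy in `G1(A,B)`:
II's move in round `n` depends on I's previous moves `a 0, …, a (n-1)`
together with I's current move `a n`; it is legal and always produces a member of `B`. -/
def IIWinsG1 (A B : Set (Set M)) : Prop :=
  ∃ σ : List (Set M) → Set M → M,
    ∀ a : ℕ → Set M, (∀ n, a n ∈ A) →
      (∀ n, σ (hist a n) (a n) ∈ a n) ∧
      Set.range (fun n => σ (hist a n) (a n)) ∈ B

/-- Player II has a winning Markov strategy in `G1(A,B)`: II's move depends only on
I's current move and the round number. -/
def IIMarkovWinsG1 (A B : Set (Set M)) : Prop :=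
  ∃ σ : Set M → ℕ → M,
    ∀ a : ℕ → Set M, (∀ n, a n ∈ A) →
      (∀ n, σ (a n) n ∈ a n) ∧
      Set.range (fun n => σ (a n) n) ∈ B

end SelectionGames

section TopologicalGames

variable {X : Type*}

/-- `𝒰` is an open cover of the space `X`. -/
def IsOpenCover [TopologicalSpace X] (𝒰 : Set (Set X)) : Prop :=
  (∀ U ∈ 𝒰, IsOpen U) ∧ ⋃₀ 𝒰 = Set.univ

/-- `𝒰` is an ω-cover of `X`: an open cover such that every finite subset of `X`
is contained in a single member of `𝒰`. -/
def IsOmegaCover [TopologicalSpace X] (𝒰 : Set (Set X)) : Prop :=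
  IsOpenCover 𝒰 ∧ ∀ F : Finset X, ∃ U ∈ 𝒰, ↑F ⊆ U

/-- `D` is a closed discrete subset of the space. -/
def IsClosedDiscrete [TopologicalSpace X] (D : Set X) : Prop :=
  IsClosed D ∧ ∀ x ∈ D, ∃ U : Set X, IsOpen U ∧ U ∩ D = {x}

/-- Player I has a winning predetermined strategy in the point-open game `PO(X)`. -/
def IPredetWinsPO (X : Type*) [TopologicalSpace X] : Prop :=
  ∃ p : ℕ → X, ∀ U : ℕ → Set X,
    (∀ n, IsOpen (U n) ∧ p n ∈ U n) → (⋃ n, U n) = Set.univ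

/-- Player II has a winning Markov strategy in the point-open game `PO(X)`. -/
def IIMarkovWinsPO (X : Type*) [TopologicalSpace X] : Prop :=
  ∃ σ : X → ℕ → Set X,
    (∀ x n, IsOpen (σ x n) ∧ x ∈ σ x n) ∧
    ∀ p : ℕ → X, (⋃ n, σ (p n) n) ≠ Set.univ

/-- Player I has a winning predetermined strategy in the finite-open game `FO(X)`. -/
def IPredetWinsFO (X : Type*) [TopologicalSpace X] : Prop :=
  ∃ p : ℕ → Finset X, ∀ U : ℕ → Set X,
    (∀ n, IsOpen (U n) ∧ ↑(p n) ⊆ U n) → (⋃ n, U n) = Set.univ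

/-- Player II has a winning Markov strategy in the finite-open game `FO(X)`. -/
def IIMarkovWinsFO (X : Type*) [TopologicalSpace X] : Prop :=
  ∃ σ : Finset X → ℕ → Set X,
    (∀ F n, IsOpen (σ F n) ∧ ↑F ⊆ σ F n) ∧
    ∀ F : ℕ → Finset X, (⋃ n, σ (F n) n) ≠ Set.univ

/-- Player I has a winning predetermined strategy in the game `ΩFO(X)`. -/
def IPredetWinsOmegaFO (X : Type*) [TopologicalSpace X] : Prop :=
  ∃ p : ℕ → Finset X, ∀ U : ℕ → Set X,
    (∀ n, IsOpen (U n) ∧ ↑(p n) ⊆ U n) → IsOmegaCover (Set.range U)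

/-- Player I has a winning (perfect-information) strategy in the game `ΩFO(X)`:
I's move in round `n` depends on II's previous moves `U 0, …, U (n-1)`. -/
def IWinsOmegaFO (X : Type*) [TopologicalSpace X] : Prop :=
  ∃ σ : List (Set X) → Finset X, ∀ U : ℕ → Set X,
    (∀ n, IsOpen (U n) ∧ ↑(σ (hist U n)) ⊆ U n) → IsOmegaCover (Set.range U)

/-- Player II has a winning (perfect-information) strategy in the game `ΩFO(X)`:
II's move in round `n` depends on I's previous moves together with I's current move. -/
def IIWinsOmegaFO (X : Type*) [TopologicalSpace X] : Prop :=
  ∃ σ : List (Finset X) → Finset X → Set X,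
    (∀ h F, IsOpen (σ h F) ∧ ↑F ⊆ σ h F) ∧
    ∀ F : ℕ → Finset X, ¬ IsOmegaCover (Set.range fun n => σ (hist F n) (F n))

/-- Player II has a winning Markov strategy in the game `ΩFO(X)`. -/
def IIMarkovWinsOmegaFO (X : Type*) [TopologicalSpace X] : Prop :=
  ∃ σ : Finset X → ℕ → Set X,
    (∀ F n, IsOpen (σ F n) ∧ ↑F ⊆ σ F n) ∧
    ∀ F : ℕ → Finset X, ¬ IsOmegaCover (Set.range fun n => σ (F n) n)

/-- Player II has a winning tactic in the game `ΩPO(X)`: II's move depends only on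
I's current move. -/
def IITacticWinsOmegaPO (X : Type*) [TopologicalSpace X] : Prop :=
  ∃ σ : X → Set X,
    (∀ x, IsOpen (σ x) ∧ x ∈ σ x) ∧
    ∀ p : ℕ → X, ¬ IsOmegaCover (Set.range fun n => σ (p n))

/-- Player I has a winning (perfect-information) strategy in the discrete
selection game `CD(Y)`. -/
def IWinsCD (Y : Type*) [TopologicalSpace Y] : Prop :=
  ∃ σ : List Y → Set Y,
    (∀ h, IsOpen (σ h) ∧ (σ h).Nonempty) ∧
    ∀ y : ℕ → Y, (∀ n, y n ∈ σ (hist y n)) → ¬ IsClosedDiscrete (Set.range y)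

/-- Player I has a winning predetermined strategy in the discrete selection game `CD(Y)`. -/
def IPredetWinsCD (Y : Type*) [TopologicalSpace Y] : Prop :=
  ∃ U : ℕ → Set Y, (∀ n, IsOpen (U n) ∧ (U n).Nonempty) ∧
    ∀ y : ℕ → Y, (∀ n, y n ∈ U n) → ¬ IsClosedDiscrete (Set.range y)

/-- Player II has a winning (perfect-information) strategy in the discrete
selection game `CD(Y)`. -/
def IIWinsCD (Y : Type*) [TopologicalSpace Y] : Prop :=
  ∃ σ : List (Set Y) → Set Y → Y,
    ∀ U : ℕ → Set Y, (∀ n, IsOpen (U n) ∧ (U n).Nonempty) →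
      (∀ n, σ (hist U n) (U n) ∈ U n) ∧
      IsClosedDiscrete (Set.range fun n => σ (hist U n) (U n))

/-- Player II has a winning Markov strategy in the discrete selection game `CD(Y)`. -/
def IIMarkovWinsCD (Y : Type*) [TopologicalSpace Y] : Prop :=
  ∃ σ : Set Y → ℕ → Y,
    ∀ U : ℕ → Set Y, (∀ n, IsOpen (U n) ∧ (U n).Nonempty) →
      (∀ n, σ (U n) n ∈ U n) ∧
      IsClosedDiscrete (Set.range fun n => σ (U n) n)

/-- Player II has a winning (perfect-information) strategy in the closure game `CL(Y,x)`. -/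
def IIWinsCL (Y : Type*) [TopologicalSpace Y] (x : Y) : Prop :=
  ∃ σ : List (Set Y) → Set Y → Y,
    ∀ U : ℕ → Set Y, (∀ n, IsOpen (U n) ∧ (U n).Nonempty) →
      (∀ n, σ (hist U n) (U n) ∈ U n) ∧
      x ∉ closure (Set.range fun n => σ (hist U n) (U n))

/-- Player II has a winning Markov strategy in the closure game `CL(Y,x)`. -/
def IIMarkovWinsCL (Y : Type*) [TopologicalSpace Y] (x : Y) : Prop :=
  ∃ σ : Set Y → ℕ → Y,
    ∀ U : ℕ → Set Y, (∀ n, IsOpen (U n) ∧ (U n).Nonempty) →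
      (∀ n, σ (U n) n ∈ U n) ∧
      x ∉ closure (Set.range fun n => σ (U n) n)

/-- Player II has a winning (perfect-information) strategy in Gruenhage's
clustering game at `x`. -/
def IIWinsGruCluster (Y : Type*) [TopologicalSpace Y] (x : Y) : Prop :=
  ∃ σ : List (Set Y) → Set Y → Y,
    ∀ U : ℕ → Set Y, (∀ n, IsOpen (U n) ∧ x ∈ U n) →
      (∀ n, σ (hist U n) (U n) ∈ U n) ∧
      ¬ MapClusterPt x atTop (fun n => σ (hist U n) (U n))

/-- Player II has a winning Markov strategy in Gruenhage's clustering game at `x`. -/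
def IIMarkovWinsGruCluster (Y : Type*) [TopologicalSpace Y] (x : Y) : Prop :=
  ∃ σ : Set Y → ℕ → Y,
    ∀ U : ℕ → Set Y, (∀ n, IsOpen (U n) ∧ x ∈ U n) →
      (∀ n, σ (U n) n ∈ U n) ∧
      ¬ MapClusterPt x atTop (fun n => σ (U n) n)

/-- Player I has a winning predetermined strategy in Gruenhage's clustering game at `x`. -/
def IPredetWinsGruCluster (Y : Type*) [TopologicalSpace Y] (x : Y) : Prop :=
  ∃ U : ℕ → Set Y, (∀ n, IsOpen (U n) ∧ x ∈ U n) ∧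
    ∀ y : ℕ → Y, (∀ n, y n ∈ U n) → MapClusterPt x atTop y

/-- Player I has a winning predetermined strategy in Gruenhage's W-game at `x`
(I wins when II's points converge to `x`). -/
def IPredetWinsGruW (Y : Type*) [TopologicalSpace Y] (x : Y) : Prop :=
  ∃ U : ℕ → Set Y, (∀ n, IsOpen (U n) ∧ x ∈ U n) ∧
    ∀ y : ℕ → Y, (∀ n, y n ∈ U n) → Filter.Tendsto y atTop (𝓝 x)

end TopologicalGames

/-- `Cp X`: the continuous real-valued functions on `X` with the topology of
pointwise convergence (inherited from the product topology on `X → ℝ`). -/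
def Cp (X : Type*) [TopologicalSpace X] : Type _ := {f : X → ℝ // Continuous f}

instance (X : Type*) [TopologicalSpace X] : TopologicalSpace (Cp X) :=
  inferInstanceAs (TopologicalSpace {f : X → ℝ // Continuous f})

/-- The constant zero function, as an element of `Cp X`. -/
def Cp.zero (X : Type*) [TopologicalSpace X] : Cp X := ⟨fun _ => 0, continuous_const⟩

lemma hist_succ' {α : Type*} (a : ℕ → α) (n : ℕ) :
    hist a (n + 1) = hist a n ++ [a n] := by
  unfold hist
  rw [List.ofFn_succ']
  simp [List.concat_eq_append]

/-- For a T3.5 space `X`, if II has a winning strategy in the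
ω-Rothberger game `G1(Ω_X, Ω_X)`, then I has a winning strategy in `ΩFO(X)`. -/
theorem II_wins_omega_rothberger_implies_I_wins_omegaFO
    (X : Type*) [TopologicalSpace X] [T35Space X]
    (h : IIWinsG1 {𝒰 : Set (Set X) | IsOmegaCover 𝒰} {𝒰 : Set (Set X) | IsOmegaCover 𝒰}) :
    IWinsOmegaFO X := by
  classical
  obtain ⟨σ, hσ⟩ := h
  have huniv : IsOmegaCover ({Set.univ} : Set (Set X)) := by
    refine ⟨⟨?_, ?_⟩, ?_⟩
    · rintro U hU; rw [Set.mem_singleton_iff] at hU; rw [hU]; exact isOpen_univ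
    · simp
    · intro F; exact ⟨Set.univ, rfl, by simp⟩
  -- legality of the strategy at any finite position consisting of ω-covers
  have hlegal : ∀ l : List (Set (Set X)), (∀ V ∈ l, IsOmegaCover V) →
      ∀ 𝒰 : Set (Set X), IsOmegaCover 𝒰 → σ l 𝒰 ∈ 𝒰 := by
    intro l hl 𝒰 h𝒰
    set a : ℕ → Set (Set X) := fun n => if hn : n < l.length then l.get ⟨n, hn⟩
      else if n = l.length then 𝒰 else {Set.univ} with ha
    have hmem : ∀ n, a n ∈ {𝒱 : Set (Set X) | IsOmegaCover 𝒱} := by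
      intro n
      simp only [ha, Set.mem_setOf_eq]
      by_cases hn : n < l.length
      · rw [dif_pos hn]; exact hl _ (l.get_mem ⟨n, hn⟩)
      · rw [dif_neg hn]
        by_cases hn' : n = l.length
        · rw [if_pos hn']; exact h𝒰
        · rw [if_neg hn']; exact huniv
    have hh : hist a l.length = l := by
      unfold hist
      have : (fun i : Fin l.length => a i) = fun i : Fin l.length => l.get i := by
        funext i; simp [ha, i.isLt]
      rw [this, List.ofFn_get]
    have han : a l.length = 𝒰 := by simp [ha]
    have := (hσ a hmem).1 l.length
    rwa [hh, han] at this
  -- Galvin's key lemma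
  have hkey : ∀ l : List (Set (Set X)), ∃ F : Finset X,
      (∀ V ∈ l, IsOmegaCover V) →
      ∀ U : Set X, IsOpen U → ↑F ⊆ U → ∃ 𝒰 : Set (Set X), IsOmegaCover 𝒰 ∧ σ l 𝒰 = U := by
    intro l
    by_cases hl : ∀ V ∈ l, IsOmegaCover V
    · by_contra hcon
      push_neg at hcon
      have hcon' : ∀ F : Finset X, ∃ U : Set X, IsOpen U ∧ ↑F ⊆ U ∧
          ∀ 𝒰 : Set (Set X), IsOmegaCover 𝒰 → σ l 𝒰 ≠ U := by
        intro F
        obtain ⟨-, U, hU1, hU2, hU3⟩ := hcon F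
        exact ⟨U, hU1, hU2, hU3⟩
      choose g hg using hcon'
      have h𝒢 : IsOmegaCover (Set.range g) := by
        refine ⟨⟨?_, ?_⟩, ?_⟩
        · rintro U ⟨F, rfl⟩; exact (hg F).1
        · apply Set.eq_univ_of_forall
          intro x
          exact ⟨g {x}, ⟨{x}, rfl⟩, (hg {x}).2.1 (by simp)⟩
        · intro F; exact ⟨g F, ⟨F, rfl⟩, (hg F).2.1⟩
      obtain ⟨F0, hF0⟩ := hlegal l hl (Set.range g) h𝒢
      exact (hg F0).2.2 (Set.range g) h𝒢 hF0.symm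
    · exact ⟨∅, fun hP => absurd hP hl⟩
  choose Fsel hFsel using hkey
  have hnext : ∀ (l : List (Set (Set X))) (U : Set X), ∃ 𝒰 : Set (Set X),
      ((∀ V ∈ l, IsOmegaCover V) ∧ IsOpen U ∧ ↑(Fsel l) ⊆ U) →
      IsOmegaCover 𝒰 ∧ σ l 𝒰 = U := by
    intro l U
    by_cases hc : (∀ V ∈ l, IsOmegaCover V) ∧ IsOpen U ∧ ↑(Fsel l) ⊆ U
    · obtain ⟨𝒰, h1, h2⟩ := hFsel l hc.1 U hc.2.1 hc.2.2
      exact ⟨𝒰, fun _ => ⟨h1, h2⟩⟩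
    · exact ⟨∅, fun hc' => absurd hc' hc⟩
  choose nxt hnxt using hnext
  -- build the covers played against σ, as a function of II's (reversed) history
  let rcovs : List (Set X) → List (Set (Set X)) :=
    fun l => l.rec [] (fun U _ ih => nxt ih.reverse U :: ih)
  let covs : List (Set X) → List (Set (Set X)) := fun l => (rcovs l.reverse).reverse
  have rcovs_cons : ∀ (U : Set X) (t : List (Set X)),
      rcovs (U :: t) = nxt (rcovs t).reverse U :: rcovs t := fun _ _ => rfl
  have covs_nil : covs [] = [] := rfl
  have covs_concat : ∀ (l : List (Set X)) (U : Set X),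
      covs (l ++ [U]) = covs l ++ [nxt (covs l) U] := by
    intro l U
    show (rcovs ((l ++ [U]).reverse)).reverse = _
    rw [List.reverse_append, List.reverse_singleton, List.singleton_append, rcovs_cons,
      List.reverse_cons]
  refine ⟨fun l => Fsel (covs l), ?_⟩
  intro U hU
  set a : ℕ → Set (Set X) := fun n => nxt (covs (hist U n)) (U n) with ha
  have hclaim : ∀ n, covs (hist U n) = hist a n ∧ ∀ V ∈ hist a n, IsOmegaCover V := by
    intro n
    induction n with
    | zero => constructor <;> simp [hist, covs_nil]
    | succ n ih =>
      obtain ⟨h1, h2⟩ := ih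
      have hc := hnxt (covs (hist U n)) (U n)
        ⟨by rw [h1]; exact h2, (hU n).1, (hU n).2⟩
      constructor
      · rw [hist_succ' U n, covs_concat, hist_succ' a n,
          show nxt (covs (hist U n)) (U n) = a n from rfl, h1]
      · rw [hist_succ' a n]
        intro V hV
        rcases List.mem_append.1 hV with hV | hV
        · exact h2 V hV
        · rw [List.mem_singleton.1 hV]; exact hc.1
  have hspec : ∀ n, IsOmegaCover (a n) ∧ σ (hist a n) (a n) = U n := by
    intro n
    obtain ⟨h1, h2⟩ := hclaim n
    have hc := hnxt (covs (hist U n)) (U n)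
      ⟨by rw [h1]; exact h2, (hU n).1, (hU n).2⟩
    exact ⟨hc.1, by rw [← h1]; exact hc.2⟩
  obtain ⟨-, hwin⟩ := hσ a (fun n => (hspec n).1)
  have : (fun n => σ (hist a n) (a n)) = U := funext fun n => (hspec n).2
  rwa [this] at hwin
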